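/- Let G be a group quasi-isometric to ℤⁿ (with the word metric from the standard generating set). If H ≤ G is a subgroup also quasi-isometric to ℤⁿ, then H has finite index in G. (Special case: a monomorphism between two groups quasi-isometric to ℤⁿ has image of finite index.) -/

import Mathlib

/-- The word distance on a group `G` associated to a generating set `Sg`. -/
noncomputable def wordDist {G : Type*} [Group G] (Sg : Set G) (x y : G) : ℝ :=
  sInf {r : ℝ | ∃ l : List G, (∀ s ∈ l, s ∈ Sg ∨ s⁻¹ ∈ Sg) ∧ l.prod = x⁻¹ * y ∧
    r = l.length}

namespace QIZnAux

variable {G : Type} [Group G]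

lemma exists_rep (Sg : Set G) (hgen : Subgroup.closure Sg = ⊤) (g : G) :
    ∃ l : List G, (∀ s ∈ l, s ∈ Sg ∨ s⁻¹ ∈ Sg) ∧ l.prod = g := by
  have hg : g ∈ Submonoid.closure (Sg ∪ Sg⁻¹) := by
    have h1 : g ∈ (Subgroup.closure Sg).toSubmonoid := by
      rw [Subgroup.mem_toSubmonoid, hgen]; trivial
    rwa [Subgroup.closure_toSubmonoid] at h1
  obtain ⟨l, hl, hp⟩ := Submonoid.exists_list_of_mem_closure hg
  refine ⟨l, fun s hs => ?_, hp⟩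
  rcases hl s hs with h | h
  · exact Or.inl h
  · exact Or.inr (Set.mem_inv.mp h)

lemma wordDist_le (Sg : Set G) (x y : G) (l : List G)
    (h1 : ∀ s ∈ l, s ∈ Sg ∨ s⁻¹ ∈ Sg) (h2 : l.prod = x⁻¹ * y) :
    wordDist Sg x y ≤ l.length :=
  csInf_le ⟨0, by rintro r ⟨l', -, -, rfl⟩; positivity⟩ ⟨l, h1, h2, rfl⟩

lemma wordDist_exists (Sg : Set G) (hgen : Subgroup.closure Sg = ⊤) (x y : G) :
    ∃ l : List G, (∀ s ∈ l, s ∈ Sg ∨ s⁻¹ ∈ Sg) ∧ l.prod = x⁻¹ * y ∧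
      wordDist Sg x y = l.length := by
  classical
  have hne : ∃ k : ℕ, ∃ l : List G, (∀ s ∈ l, s ∈ Sg ∨ s⁻¹ ∈ Sg) ∧ l.prod = x⁻¹ * y ∧
      l.length = k := by
    obtain ⟨l, h1, h2⟩ := exists_rep Sg hgen (x⁻¹ * y)
    exact ⟨l.length, l, h1, h2, rfl⟩
  obtain ⟨l, h1, h2, h3⟩ := Nat.find_spec hne
  refine ⟨l, h1, h2, ?_⟩
  have hleast : IsLeast {r : ℝ | ∃ l : List G, (∀ s ∈ l, s ∈ Sg ∨ s⁻¹ ∈ Sg) ∧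
      l.prod = x⁻¹ * y ∧ r = l.length} (l.length : ℝ) := by
    constructor
    · exact ⟨l, h1, h2, rfl⟩
    · rintro r ⟨l', h1', h2', rfl⟩
      have hk : Nat.find hne ≤ l'.length := Nat.find_min' hne ⟨l', h1', h2', rfl⟩
      rw [h3]
      exact_mod_cast hk
  exact hleast.csInf_eq

lemma wordDist_eq (Sg : Set G) (x y : G) :
    wordDist Sg x y = wordDist Sg 1 (x⁻¹ * y) := by
  unfold wordDist
  rw [inv_one, one_mul]

lemma wordDist_triangle (Sg : Set G) (hgen : Subgroup.closure Sg = ⊤) (x y z : G) :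
    wordDist Sg x z ≤ wordDist Sg x y + wordDist Sg y z := by
  obtain ⟨l1, h11, h12, h13⟩ := wordDist_exists Sg hgen x y
  obtain ⟨l2, h21, h22, h23⟩ := wordDist_exists Sg hgen y z
  have hprod : (l1 ++ l2).prod = x⁻¹ * z := by
    rw [List.prod_append, h12, h22]; group
  have hval : ∀ s ∈ l1 ++ l2, s ∈ Sg ∨ s⁻¹ ∈ Sg := by
    intro s hs
    rcases List.mem_append.mp hs with h | h
    · exact h11 s h
    · exact h21 s h
  calc wordDist Sg x z ≤ ((l1 ++ l2).length : ℝ) := wordDist_le Sg x z _ hval hprod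
    _ = wordDist Sg x y + wordDist Sg y z := by
        rw [List.length_append, h13, h23]; push_cast; ring

lemma ballG_finite (Sg : Set G) (hfin : Sg.Finite) (hgen : Subgroup.closure Sg = ⊤) (ρ : ℝ) :
    {g : G | wordDist Sg 1 g ≤ ρ}.Finite := by
  have key : ∀ N : ℕ, {g : G | ∃ l : List G, (∀ s ∈ l, s ∈ Sg ∨ s⁻¹ ∈ Sg) ∧
      l.length ≤ N ∧ l.prod = g}.Finite := by
    intro N
    induction N with
    | zero =>
      apply Set.Finite.subset (Set.finite_singleton (1 : G))
      rintro g ⟨l, -, hlen, hprod⟩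
      have hl : l = [] := List.length_eq_zero_iff.mp (Nat.le_zero.mp hlen)
      subst hl
      simp only [List.prod_nil] at hprod
      simp [← hprod]
    | succ N ih =>
      have hT : (Sg ∪ Sg⁻¹).Finite := hfin.union hfin.inv
      apply Set.Finite.subset (ih.union (Set.Finite.image2 (· * ·) hT ih))
      rintro g ⟨l, hval, hlen, hprod⟩
      cases l with
      | nil => exact Or.inl ⟨[], by simp, Nat.zero_le _, hprod⟩
      | cons s l' =>
        right
        apply Set.mem_image2.mpr
        refine ⟨s, ?_, l'.prod, ⟨l', fun t ht => hval t (List.mem_cons_of_mem _ ht), ?_, rfl⟩, ?_⟩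
        · rcases hval s List.mem_cons_self with h | h
          · exact Or.inl h
          · exact Or.inr (Set.mem_inv.mpr h)
        · simpa using hlen
        · rw [← hprod, List.prod_cons]
  apply Set.Finite.subset (key ⌊ρ⌋₊)
  intro g hg
  obtain ⟨l, h1, h2, h3⟩ := wordDist_exists Sg hgen 1 g
  refine ⟨l, h1, Nat.le_floor ?_, by simpa using h2⟩
  rw [← h3]; exact hg

/-- ℓ¹ distance on `ℤⁿ` (as a real number). -/
noncomputable def dZ (n : ℕ) (a b : Fin n → ℤ) : ℝ :=
  ∑ i : Fin n, |((a i : ℝ)) - ((b i : ℝ))|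

lemma dZ_self (n : ℕ) (a : Fin n → ℤ) : dZ n a a = 0 := by simp [dZ]

lemma dZ_symm (n : ℕ) (a b : Fin n → ℤ) : dZ n a b = dZ n b a :=
  Finset.sum_congr rfl fun i _ => abs_sub_comm _ _

lemma dZ_triangle (n : ℕ) (a b c : Fin n → ℤ) : dZ n a c ≤ dZ n a b + dZ n b c := by
  unfold dZ
  rw [← Finset.sum_add_distrib]
  exact Finset.sum_le_sum fun i _ => abs_sub_le _ _ _

/-- Box in `ℤⁿ` centered at `c` with radius `M`. -/
noncomputable def zbox (n : ℕ) (c : Fin n → ℤ) (M : ℕ) : Finset (Fin n → ℤ) :=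
  Fintype.piFinset fun i => Finset.Icc (c i - (M : ℤ)) (c i + (M : ℤ))

lemma zbox_card (n : ℕ) (c : Fin n → ℤ) (M : ℕ) : (zbox n c M).card = (2 * M + 1) ^ n := by
  rw [zbox, Fintype.card_piFinset]
  have h : ∀ i : Fin n, (Finset.Icc (c i - (M : ℤ)) (c i + (M : ℤ))).card = 2 * M + 1 := by
    intro i; rw [Int.card_Icc]; omega
  simp only [h]
  rw [Finset.prod_const, Finset.card_univ, Fintype.card_fin]

lemma mem_zbox (n : ℕ) (c a : Fin n → ℤ) (ρ : ℝ) (h : dZ n c a ≤ ρ) :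
    a ∈ zbox n c ⌈ρ⌉₊ := by
  apply Fintype.mem_piFinset.mpr
  intro i
  have h1 : |(c i : ℝ) - a i| ≤ ρ :=
    le_trans (Finset.single_le_sum (f := fun j => |(c j : ℝ) - (a j : ℝ)|)
      (fun j _ => abs_nonneg _) (Finset.mem_univ i)) h
  have h2 : |c i - a i| ≤ (⌈ρ⌉₊ : ℤ) := by
    have h3 : ((|c i - a i| : ℤ) : ℝ) ≤ ((⌈ρ⌉₊ : ℤ) : ℝ) := by
      push_cast
      exact le_trans h1 (Nat.le_ceil ρ)
    exact_mod_cast h3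
  rw [Finset.mem_Icc]
  have h4 := abs_le.mp h2
  omega

lemma zbox0_le (n : ℕ) (m' : ℕ) (a : Fin n → ℤ) (ha : a ∈ zbox n 0 m') :
    dZ n 0 a ≤ (n : ℝ) * m' := by
  have h : ∀ i : Fin n, |((0 : Fin n → ℤ) i : ℝ) - a i| ≤ (m' : ℝ) := by
    intro i
    have h1 := Fintype.mem_piFinset.mp ha i
    rw [Finset.mem_Icc] at h1
    simp only [Pi.zero_apply, zero_sub, zero_add] at h1
    have h0 : (((0 : Fin n → ℤ) i : ℤ) : ℝ) = 0 := by simp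
    rw [h0, zero_sub, abs_neg, abs_le]
    constructor
    · have : -(m' : ℤ) ≤ a i := by omega
      exact_mod_cast this
    · have : a i ≤ (m' : ℤ) := by omega
      exact_mod_cast this
  calc dZ n 0 a ≤ ∑ _i : Fin n, (m' : ℝ) := Finset.sum_le_sum fun i _ => h i
    _ = (n : ℝ) * m' := by rw [Finset.sum_const, Finset.card_univ, Fintype.card_fin, nsmul_eq_mul]

end QIZnAux

/-- `(X, dX)` and `(Y, dY)` are quasi-isometric (via explicit distance functions). -/
def IsQIMapBetween {X Y : Type*} (dX : X → X → ℝ) (dY : Y → Y → ℝ) : Prop :=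
  ∃ (K L : ℝ) (f : X → Y), 1 ≤ K ∧ 0 ≤ L ∧
    (∀ x y : X, (1 / K) * dX x y - L ≤ dY (f x) (f y) ∧
      dY (f x) (f y) ≤ K * dX x y + L) ∧
    ∀ y : Y, ∃ x : X, dY y (f x) ≤ K

open QIZnAux

/-- Let `G` be a finitely generated group quasi-isometric to `ℤⁿ`. If `H ≤ G` (with the
subspace metric coming from an orbit in the Cayley graph of `G`) is also quasi-isometric
to `ℤⁿ`, then `H` has finite index in `G`. -/
theorem subgroup_qi_to_Zn_finite_index (n : ℕ) (G : Type) [Group G]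
    (Sg : Set G) (hSgfin : Sg.Finite) (hSggen : Subgroup.closure Sg = ⊤)
    (H : Subgroup G)
    (hG : IsQIMapBetween (wordDist Sg)
      (fun a b : Fin n → ℤ => ∑ i : Fin n, |((a i : ℝ)) - ((b i : ℝ))|))
    (hH : IsQIMapBetween (fun a b : H => wordDist Sg (a : G) (b : G))
      (fun a b : Fin n → ℤ => ∑ i : Fin n, |((a i : ℝ)) - ((b i : ℝ))|)) :
    H.index ≠ 0 := by
  classical
  obtain ⟨K, L, f, hK, hL, hf, -⟩ := hG
  obtain ⟨K', L', φ, hK', hL', hφ, hsur⟩ := hH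
  have hK0 : (0 : ℝ) < K := lt_of_lt_of_le one_pos hK
  have hK'0 : (0 : ℝ) < K' := lt_of_lt_of_le one_pos hK'
  have hball : ∀ ρ : ℝ, {g : G | wordDist Sg 1 g ≤ ρ}.Finite :=
    fun ρ => ballG_finite Sg hSgfin hSggen ρ
  set ballF : ℝ → Finset G := fun ρ => (hball ρ).toFinset with hballF
  have mem_ballF : ∀ {ρ : ℝ} {g : G}, g ∈ ballF ρ ↔ wordDist Sg 1 g ≤ ρ :=
    fun {ρ g} => (hball ρ).mem_toFinset
  set P := (ballF (K * L)).card with hP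
  set E := dZ n (φ 1) 0 with hE
  set M := (2 * ⌈2 * K'⌉₊ + 1) ^ n with hM
  have hfl : ∀ x y : G, (1 / K) * wordDist Sg x y - L ≤ dZ n (f x) (f y) :=
    fun x y => (hf x y).1
  have hfu : ∀ x y : G, dZ n (f x) (f y) ≤ K * wordDist Sg x y + L :=
    fun x y => (hf x y).2
  have hφl : ∀ x y : H, (1 / K') * wordDist Sg (x : G) (y : G) - L' ≤ dZ n (φ x) (φ y) :=
    fun x y => (hφ x y).1
  have hsur' : ∀ a : Fin n → ℤ, ∃ x : H, dZ n a (φ x) ≤ K' := hsur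
  -- Step C : upper bound on cardinality of balls in G
  have stepC : ∀ t : ℝ, (ballF t).card ≤ P * (2 * ⌈K * t + L⌉₊ + 1) ^ n := by
    intro t
    have hmaps : ∀ g ∈ ballF t, f g ∈ zbox n (f 1) ⌈K * t + L⌉₊ := by
      intro g hg
      apply mem_zbox
      calc dZ n (f 1) (f g) ≤ K * wordDist Sg 1 g + L := hfu 1 g
        _ ≤ K * t + L := by
            have h1 := mem_ballF.mp hg
            nlinarith
    have hfib : ∀ b ∈ zbox n (f 1) ⌈K * t + L⌉₊,
        ((ballF t).filter (fun g => f g = b)).card ≤ P := by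
      intro b _
      rcases Finset.eq_empty_or_nonempty ((ballF t).filter (fun g => f g = b)) with he | ⟨g₀, hg₀⟩
      · simp [he]
      · have hg₀' := Finset.mem_filter.mp hg₀
        have hsub : (ballF t).filter (fun g => f g = b) ⊆
            (ballF (K * L)).image (fun x => g₀ * x) := by
          intro g' hg'
          have hg'' := Finset.mem_filter.mp hg'
          have hdz : dZ n (f g₀) (f g') = 0 := by rw [hg₀'.2, hg''.2]; exact dZ_self n b
          have hle : wordDist Sg g₀ g' ≤ K * L := by
            have h5 := hfl g₀ g'
            rw [hdz] at h5
            have h6 : (1 / K) * wordDist Sg g₀ g' ≤ L := by linarith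
            calc wordDist Sg g₀ g' = K * ((1 / K) * wordDist Sg g₀ g') := by field_simp
              _ ≤ K * L := by nlinarith
          refine Finset.mem_image.mpr ⟨g₀⁻¹ * g', mem_ballF.mpr ?_, by group⟩
          rw [← wordDist_eq Sg g₀ g']
          exact hle
        calc ((ballF t).filter (fun g => f g = b)).card
            ≤ ((ballF (K * L)).image (fun x => g₀ * x)).card := Finset.card_le_card hsub
          _ ≤ P := Finset.card_image_le
    calc (ballF t).card ≤ P * (zbox n (f 1) ⌈K * t + L⌉₊).card :=
          Finset.card_le_mul_card_image_of_maps_to hmaps P hfib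
      _ = P * (2 * ⌈K * t + L⌉₊ + 1) ^ n := by rw [zbox_card]
  -- Step A : lower bound on cardinality of balls in H
  set hmap : (Fin n → ℤ) → G := fun a => ((hsur' a).choose : G) with hhmap
  have stepA : ∀ m' : ℕ,
      (2 * m' + 1) ^ n ≤ M * ((ballF (K' * (E + (n : ℝ) * (m' : ℝ) + K' + L'))).filter
        (fun g => g ∈ H)).card := by
    intro m'
    set ρ := K' * (E + (n : ℝ) * (m' : ℝ) + K' + L') with hρ
    have hmaps : ∀ a ∈ zbox n 0 m', hmap a ∈ (ballF ρ).filter (fun g => g ∈ H) := by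
      intro a ha
      have hch : dZ n a (φ ((hsur' a).choose)) ≤ K' := (hsur' a).choose_spec
      refine Finset.mem_filter.mpr ⟨mem_ballF.mpr ?_, ((hsur' a).choose).2⟩
      have h1 : (1 / K') * wordDist Sg ((1 : H) : G) (((hsur' a).choose : H) : G) - L' ≤
          dZ n (φ 1) (φ ((hsur' a).choose)) := hφl 1 _
      have h2 : dZ n (φ 1) (φ ((hsur' a).choose)) ≤ E + (n : ℝ) * (m' : ℝ) + K' := by
        calc dZ n (φ 1) (φ ((hsur' a).choose))
            ≤ dZ n (φ 1) 0 + dZ n 0 (φ ((hsur' a).choose)) := dZ_triangle n _ _ _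
          _ ≤ dZ n (φ 1) 0 + (dZ n 0 a + dZ n a (φ ((hsur' a).choose))) := by
              have := dZ_triangle n 0 a (φ ((hsur' a).choose))
              linarith
          _ ≤ E + (n : ℝ) * (m' : ℝ) + K' := by
              have hz := zbox0_le n m' a ha
              rw [hE]
              linarith
      rw [OneMemClass.coe_one] at h1
      have h3 : wordDist Sg 1 (((hsur' a).choose : H) : G) ≤ K' * (E + (n : ℝ) * (m' : ℝ) + K' + L') := by
        have h4 : (1 / K') * wordDist Sg 1 (((hsur' a).choose : H) : G) ≤
            E + (n : ℝ) * (m' : ℝ) + K' + L' := by linarith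
        calc wordDist Sg 1 (((hsur' a).choose : H) : G)
            = K' * ((1 / K') * wordDist Sg 1 (((hsur' a).choose : H) : G)) := by field_simp
          _ ≤ K' * (E + (n : ℝ) * (m' : ℝ) + K' + L') := by nlinarith
      exact h3
    have hfib : ∀ b ∈ (zbox n 0 m').image hmap,
        ((zbox n 0 m').filter (fun a => hmap a = b)).card ≤ M := by
      intro b hb
      obtain ⟨a₀, _, rfl⟩ := Finset.mem_image.mp hb
      have hsub : (zbox n 0 m').filter (fun a => hmap a = hmap a₀) ⊆ zbox n a₀ ⌈2 * K'⌉₊ := by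
        intro a ha
        have haf : hmap a = hmap a₀ := (Finset.mem_filter.mp ha).2
        have heq : (hsur' a).choose = (hsur' a₀).choose := Subtype.coe_injective haf
        apply mem_zbox
        have t1 : dZ n a₀ (φ ((hsur' a₀).choose)) ≤ K' := (hsur' a₀).choose_spec
        have t2 : dZ n (φ ((hsur' a₀).choose)) a ≤ K' := by
          rw [dZ_symm, ← heq]
          exact (hsur' a).choose_spec
        calc dZ n a₀ a ≤ dZ n a₀ (φ ((hsur' a₀).choose)) + dZ n (φ ((hsur' a₀).choose)) a :=
              dZ_triangle n _ _ _
          _ ≤ 2 * K' := by linarith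
      calc ((zbox n 0 m').filter (fun a => hmap a = hmap a₀)).card
          ≤ (zbox n a₀ ⌈2 * K'⌉₊).card := Finset.card_le_card hsub
        _ = M := zbox_card n a₀ _
    calc (2 * m' + 1) ^ n = (zbox n 0 m').card := (zbox_card n 0 m').symm
      _ ≤ M * ((zbox n 0 m').image hmap).card := Finset.card_le_mul_card_image _ M hfib
      _ ≤ M * ((ballF ρ).filter (fun g => g ∈ H)).card := by
          apply Nat.mul_le_mul_left
          apply Finset.card_le_card
          intro b hb
          obtain ⟨a, ha, rfl⟩ := Finset.mem_image.mp hb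
          exact hmaps a ha
  -- the uniform bound on finite families of cosets
  set β := K * K' * (n : ℝ) with hβ
  set N := M * (P * (2 * ⌈β⌉₊ + 5) ^ n) with hN
  have hbound : ∀ s : Finset (G ⧸ H), s.Nonempty → s.card ≤ N := by
    intro s hs
    set rep : G ⧸ H → G := Quotient.out with hrep
    obtain ⟨R, hR⟩ : ∃ R : ℝ, ∀ q ∈ s, wordDist Sg 1 (rep q) ≤ R :=
      ⟨s.sup' hs (fun q => wordDist Sg 1 (rep q)), fun q hq => Finset.le_sup' (fun q => wordDist Sg 1 (rep q)) hq⟩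
    set α := K * R + K * K' * (E + K' + L') + L with hα
    set m' := ⌈α⌉₊ + 1 with hm'
    set ρ := K' * (E + (n : ℝ) * (m' : ℝ) + K' + L') with hρ2
    set t := R + ρ with ht
    set BH := (ballF ρ).filter (fun g => g ∈ H) with hBH
    have hdisj : ∀ q ∈ s, ∀ q' ∈ s, q ≠ q' →
        Disjoint (BH.image (fun h => rep q * h)) (BH.image (fun h => rep q' * h)) := by
      intro q _ q' _ hne
      rw [Finset.disjoint_left]
      rintro x hx hx'
      obtain ⟨h, hh, rfl⟩ := Finset.mem_image.mp hx
      obtain ⟨h', hh', he⟩ := Finset.mem_image.mp hx'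
      have hhH : h ∈ H := (Finset.mem_filter.mp hh).2
      have hh'H : h' ∈ H := (Finset.mem_filter.mp hh').2
      apply hne
      have e1 : (QuotientGroup.mk (rep q * h) : G ⧸ H) = q := by
        rw [QuotientGroup.mk_mul_of_mem _ hhH]
        exact QuotientGroup.out_eq' q
      have e2 : (QuotientGroup.mk (rep q' * h') : G ⧸ H) = q' := by
        rw [QuotientGroup.mk_mul_of_mem _ hh'H]
        exact QuotientGroup.out_eq' q'
      rw [← e1, ← e2, he]
    have hsubB : ∀ q ∈ s, BH.image (fun h => rep q * h) ⊆ ballF t := by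
      intro q hq x hx
      obtain ⟨h, hh, rfl⟩ := Finset.mem_image.mp hx
      have h1 : wordDist Sg 1 h ≤ ρ := mem_ballF.mp (Finset.mem_filter.mp hh).1
      apply mem_ballF.mpr
      have h2 : wordDist Sg (rep q) (rep q * h) = wordDist Sg 1 h := by
        rw [wordDist_eq Sg (rep q) (rep q * h), inv_mul_cancel_left]
      calc wordDist Sg 1 (rep q * h)
          ≤ wordDist Sg 1 (rep q) + wordDist Sg (rep q) (rep q * h) :=
            wordDist_triangle Sg hSggen 1 (rep q) (rep q * h)
        _ = wordDist Sg 1 (rep q) + wordDist Sg 1 h := by rw [h2]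
        _ ≤ R + ρ := add_le_add (hR q hq) h1
    have stepB : s.card * BH.card ≤ (ballF t).card := by
      calc s.card * BH.card = ∑ _q ∈ s, BH.card := by rw [Finset.sum_const, smul_eq_mul]
        _ = ∑ q ∈ s, (BH.image (fun h => rep q * h)).card :=
            Finset.sum_congr rfl (fun q _ =>
              (Finset.card_image_of_injective _ (mul_right_injective (rep q))).symm)
        _ = (s.biUnion (fun q => BH.image (fun h => rep q * h))).card :=
            (Finset.card_biUnion hdisj).symm
        _ ≤ (ballF t).card := Finset.card_le_card (Finset.biUnion_subset.mpr hsubB)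
    have h1 := stepA m'
    have h3 := stepC t
    have hval : K * t + L = α + β * (m' : ℝ) := by
      rw [ht, hρ2, hα, hβ]; push_cast; ring
    have hceil : ⌈K * t + L⌉₊ ≤ ⌈α⌉₊ + ⌈β⌉₊ * m' := by
      rw [hval]
      calc ⌈α + β * (m' : ℝ)⌉₊ ≤ ⌈α⌉₊ + ⌈β * (m' : ℝ)⌉₊ := Nat.ceil_add_le _ _
        _ ≤ ⌈α⌉₊ + ⌈β⌉₊ * m' := by
            apply Nat.add_le_add_left
            apply Nat.ceil_le.mpr
            push_cast
            exact mul_le_mul_of_nonneg_right (Nat.le_ceil β) (by positivity)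
    have h4 : 2 * ⌈K * t + L⌉₊ + 1 ≤ (2 * ⌈β⌉₊ + 5) * (2 * m' + 1) := by
      have hexp : (2 * ⌈β⌉₊ + 5) * (2 * m' + 1) =
          4 * (⌈β⌉₊ * m') + 2 * ⌈β⌉₊ + 10 * m' + 5 := by ring
      omega
    have hfinal : s.card * (2 * m' + 1) ^ n ≤ N * (2 * m' + 1) ^ n := by
      calc s.card * (2 * m' + 1) ^ n
          ≤ s.card * (M * BH.card) := Nat.mul_le_mul_left _ h1
        _ = M * (s.card * BH.card) := by ring
        _ ≤ M * (ballF t).card := Nat.mul_le_mul_left _ stepB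
        _ ≤ M * (P * (2 * ⌈K * t + L⌉₊ + 1) ^ n) := Nat.mul_le_mul_left _ h3
        _ ≤ M * (P * ((2 * ⌈β⌉₊ + 5) * (2 * m' + 1)) ^ n) := by
            apply Nat.mul_le_mul_left
            apply Nat.mul_le_mul_left
            exact Nat.pow_le_pow_left h4 n
        _ = N * (2 * m' + 1) ^ n := by rw [hN, mul_pow]; ring
    have hpos : 0 < (2 * m' + 1) ^ n := Nat.pow_pos (by omega)
    exact Nat.le_of_mul_le_mul_right hfinal hpos
  -- conclude
  intro h0
  have hcard0 : Nat.card (G ⧸ H) = 0 := by rwa [Subgroup.index] at h0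
  have hinf : Infinite (G ⧸ H) := by
    rcases Nat.card_eq_zero.mp hcard0 with he | hi
    · exact (he.false (QuotientGroup.mk (1 : G))).elim
    · exact hi
  obtain ⟨s, hscard⟩ := Infinite.exists_subset_card_eq (G ⧸ H) (N + 1)
  have hne : s.Nonempty := Finset.card_pos.mp (by omega)
  have hle := hbound s hne
  omega
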